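/- Let Θ_1, …, Θ_n ⊆ ℝ^I each be nonempty, compact, convex, containing the origin, and signed-permutation invariant, with associated functions η_1, …, η_n each having non-increasing differences. Then the intersection Θ = Θ_1 ∩ … ∩ Θ_n is signed-permutation invariant, its function η satisfies η(i) = min over h ∈ [n] of η_h(i) for every i ∈ [I], and η has non-increasing differences (η(i+1) − η(i) ≤ η(i) − η(i−1) for all i ∈ [I−1], with η(0) = 0 and η_h(0) = 0). -/
import Mathlib


/-- `Θ` is invariant under signed permutations of the coordinates. -/
def SignedPermInvariant (I : ℕ) (Θ : Set (Fin I → ℝ)) : Prop :=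
  ∀ (σ : Equiv.Perm (Fin I)) (ε : Fin I → ℝ), (∀ i, ε i = 1 ∨ ε i = -1) →
    ∀ θ ∈ Θ, (fun i => ε i * θ (σ i)) ∈ Θ

/-- `eta I Θ i` is the maximal ℓ1-norm of the first `i` components over `Θ`. -/
noncomputable def eta (I : ℕ) (Θ : Set (Fin I → ℝ)) (i : ℕ) : ℝ :=
  sSup ((fun θ => ∑ i' ∈ Finset.univ.filter (fun i' : Fin I => (i' : ℕ) < i), |θ i'|) '' Θ)

open Finset in
noncomputable def fsum (I : ℕ) (i : ℕ) (θ : Fin I → ℝ) : ℝ :=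
  ∑ i' ∈ Finset.univ.filter (fun i' : Fin I => (i' : ℕ) < i), |θ i'|

lemma eta_eq (I : ℕ) (Θ : Set (Fin I → ℝ)) (i : ℕ) : eta I Θ i = sSup (fsum I i '' Θ) := rfl

lemma fsum_cont (I i : ℕ) : Continuous (fsum I i) :=
  continuous_finset_sum _ fun j _ => (continuous_apply j).abs

lemma le_eta {I : ℕ} {Θ : Set (Fin I → ℝ)} {i : ℕ} (hc : IsCompact Θ) {θ} (hθ : θ ∈ Θ) :
    fsum I i θ ≤ eta I Θ i :=
  le_csSup ((hc.image (fsum_cont I i)).bddAbove) ⟨θ, hθ, rfl⟩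

lemma exists_eta {I : ℕ} {Θ : Set (Fin I → ℝ)} {i : ℕ} (hc : IsCompact Θ) (hne : Θ.Nonempty) :
    ∃ θ ∈ Θ, fsum I i θ = eta I Θ i := by
  obtain ⟨θ, hθ, hval⟩ := (hc.image (fsum_cont I i)).sSup_mem (hne.image _)
  exact ⟨θ, hθ, hval⟩

lemma fsum_zero' (I i : ℕ) : fsum I i (0 : Fin I → ℝ) = 0 := by
  simp [fsum]

lemma eta_nonneg {I : ℕ} {Θ : Set (Fin I → ℝ)} {i : ℕ} (hc : IsCompact Θ)
    (hz : (0 : Fin I → ℝ) ∈ Θ) : 0 ≤ eta I Θ i := by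
  have := le_eta (i := i) hc hz
  rwa [fsum_zero'] at this

lemma eta_zero {I : ℕ} {Θ : Set (Fin I → ℝ)} (hne : Θ.Nonempty) : eta I Θ 0 = 0 := by
  rw [eta_eq]
  have : fsum I 0 '' Θ = {0} := by
    apply Set.eq_singleton_iff_nonempty_unique_mem.2
    constructor
    · exact hne.image _
    · rintro x ⟨θ, -, rfl⟩
      simp [fsum]
  rw [this, csSup_singleton]

lemma eta_mono {I : ℕ} {Θ Θ' : Set (Fin I → ℝ)} {i : ℕ} (hc : IsCompact Θ')
    (hne : Θ.Nonempty) (hsub : Θ ⊆ Θ') : eta I Θ i ≤ eta I Θ' i :=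
  csSup_le_csSup ((hc.image (fsum_cont I i)).bddAbove) (hne.image _)
    (Set.image_mono hsub)

lemma flat_mem {I : ℕ} {Θ : Set (Fin I → ℝ)} (hc : IsCompact Θ) (hne : Θ.Nonempty)
    (hconv : Convex ℝ Θ) (hzero : (0 : Fin I → ℝ) ∈ Θ) (hSPI : SignedPermInvariant I Θ)
    {i : ℕ} (hi1 : 1 ≤ i) (hiI : i ≤ I) {m : ℝ} (hm0 : 0 ≤ m) (hme : m ≤ eta I Θ i) :
    (fun j : Fin I => if (j : ℕ) < i then m / i else 0) ∈ Θ := by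
  have hipos : (0 : ℝ) < i := by exact_mod_cast (by omega : 0 < i)
  obtain ⟨θs, hθs, hval⟩ := exists_eta (i := i) hc hne
  -- step 1: absolute values
  set θ1 : Fin I → ℝ := fun j => |θs j| with hθ1
  have hθ1mem : θ1 ∈ Θ := by
    have := hSPI (Equiv.refl _) (fun j => if 0 ≤ θs j then 1 else -1)
      (fun j => by by_cases h : 0 ≤ θs j <;> simp [h]) θs hθs
    convert this using 1
    funext j
    rcases le_or_gt 0 (θs j) with h | h
    · simp [hθ1, abs_of_nonneg h, h]
    · simp [hθ1, abs_of_neg h, not_le.2 h]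
  -- step 2: flip signs beyond i
  set θ2 : Fin I → ℝ := fun j => if (j : ℕ) < i then |θs j| else -|θs j| with hθ2
  have hθ2mem : θ2 ∈ Θ := by
    have := hSPI (Equiv.refl _) (fun j => if (j : ℕ) < i then 1 else -1)
      (fun j => by by_cases h : (j : ℕ) < i <;> simp [h]) θ1 hθ1mem
    convert this using 1
    funext j
    by_cases h : (j : ℕ) < i <;> simp [hθ2, hθ1, h]
  -- φ : abs on first i coords, zero beyond
  set φ : Fin I → ℝ := fun j => if (j : ℕ) < i then |θs j| else 0 with hφ
  have hφmem : φ ∈ Θ := by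
    have := hconv hθ1mem hθ2mem (by norm_num : (0:ℝ) ≤ 1/2) (by norm_num : (0:ℝ) ≤ 1/2)
      (by norm_num)
    convert this using 1
    funext j
    by_cases h : (j : ℕ) < i <;> simp [hφ, hθ1, hθ2, h] <;> ring
  have hφ0 : ∀ j : Fin I, ¬ (j : ℕ) < i → φ j = 0 := fun j h => by simp [hφ, h]
  -- the equivalence and rotations
  haveI : NeZero i := ⟨by omega⟩
  let e : Fin i ≃ {j : Fin I // (j : ℕ) < i} :=
    { toFun := fun a => ⟨⟨a, lt_of_lt_of_le a.2 hiI⟩, a.2⟩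
      invFun := fun s => ⟨(s.1 : ℕ), s.2⟩
      left_inv := fun a => rfl
      right_inv := fun s => rfl }
  let c : Fin i → Equiv.Perm (Fin I) := fun k => (Equiv.addRight k).extendDomain e
  have hcis : ∀ (k : Fin i) (j : Fin I) (h : (j : ℕ) < i),
      c k j = (e (e.symm ⟨j, h⟩ + k) : Fin I) := fun k j h =>
    Equiv.Perm.extendDomain_apply_subtype _ e h
  have hcnot : ∀ (k : Fin i) (j : Fin I), ¬ (j : ℕ) < i → c k j = j := fun k j h =>
    Equiv.Perm.extendDomain_apply_not_subtype _ e h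
  -- points
  have hpts : ∀ k : Fin i, (fun j => φ (c k j)) ∈ Θ := by
    intro k
    have := hSPI (c k) (fun _ => 1) (fun _ => Or.inl rfl) φ hφmem
    simpa using this
  set S := eta I Θ i with hS
  have hSnn : 0 ≤ S := eta_nonneg hc hzero
  -- the sum over first i coords of φ equals S
  have hsumφ : ∑ a : Fin i, φ (e a : Fin I) = S := by
    have h1 : ∑ a : Fin i, φ (e a : Fin I) = ∑ s : {j : Fin I // (j : ℕ) < i}, φ s.1 :=
      Fintype.sum_equiv e _ _ (fun a => rfl)
    have h2 : ∑ j' ∈ Finset.univ.filter (fun j' : Fin I => (j' : ℕ) < i), φ j'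
        = ∑ s : {j : Fin I // (j : ℕ) < i}, φ s.1 :=
      Finset.sum_subtype _ (by simp) _
    have h3 : ∑ j' ∈ Finset.univ.filter (fun j' : Fin I => (j' : ℕ) < i), φ j'
        = fsum I i θs := by
      apply Finset.sum_congr rfl
      intro j' hj'
      simp only [Finset.mem_filter] at hj'
      simp [hφ, hj'.2, fsum]
    rw [h1, ← h2, h3, hval]
  -- the averaged flat vector
  set v : Fin I → ℝ := fun j => if (j : ℕ) < i then S / i else 0 with hv
  have hvmem : v ∈ Θ := by
    have hmem := hconv.sum_mem (t := Finset.univ) (w := fun _ : Fin i => (i : ℝ)⁻¹)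
      (z := fun k => fun j => φ (c k j)) (fun _ _ => by positivity)
      (by rw [Finset.sum_const, Finset.card_univ, Fintype.card_fin, nsmul_eq_mul,
          mul_inv_cancel₀ hipos.ne'])
      (fun k _ => hpts k)
    convert hmem using 1
    funext j
    by_cases h : (j : ℕ) < i
    · simp only [hv, if_pos h, Finset.sum_apply, Pi.smul_apply, smul_eq_mul]
      rw [Finset.sum_congr rfl (fun k _ => by rw [hcis k j h]), ← Finset.mul_sum]
      have hbij : ∑ k : Fin i, φ (e (e.symm ⟨j, h⟩ + k) : Fin I)
          = ∑ a : Fin i, φ (e a : Fin I) :=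
        Fintype.sum_equiv (Equiv.addLeft (e.symm ⟨j, h⟩)) _ _ (fun k => rfl)
      rw [hbij, hsumφ, div_eq_inv_mul]
    · simp only [hv, if_neg h, Finset.sum_apply, Pi.smul_apply, smul_eq_mul]
      rw [Finset.sum_congr rfl (fun k _ => by rw [hcnot k j h, hφ0 j h, mul_zero])]
      simp
  -- scale down to m
  by_cases hS0 : S = 0
  · have hm : m = 0 := le_antisymm (hS0 ▸ hme) hm0
    have h0 : (fun j : Fin I => if (j : ℕ) < i then m / i else 0) = 0 := by
      funext j; by_cases h : (j : ℕ) < i <;> simp [h, hm]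
    rw [h0]; exact hzero
  · have hSpos : 0 < S := lt_of_le_of_ne hSnn (Ne.symm hS0)
    have ht0 : 0 ≤ m / S := div_nonneg hm0 hSnn
    have ht1 : m / S ≤ 1 := (div_le_one hSpos).2 hme
    have hcm := hconv hvmem hzero ht0 (by linarith : (0:ℝ) ≤ 1 - m / S) (by ring)
    convert hcm using 1
    funext j
    by_cases h : (j : ℕ) < i
    · simp only [hv, Pi.add_apply, Pi.smul_apply, smul_eq_mul, Pi.zero_apply,
        if_pos h, mul_zero, add_zero]
      field_simp
    · simp [hv, h]

lemma card_filter_lt {I i : ℕ} (hiI : i ≤ I) :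
    (Finset.univ.filter (fun j : Fin I => (j : ℕ) < i)).card = i := by
  have e : {j : Fin I // (j : ℕ) < i} ≃ Fin i :=
    { toFun := fun s => ⟨(s.1 : ℕ), s.2⟩
      invFun := fun a => ⟨⟨a, lt_of_lt_of_le a.2 hiI⟩, a.2⟩
      left_inv := fun s => rfl
      right_inv := fun a => rfl }
  rw [← Fintype.card_subtype, Fintype.card_congr e, Fintype.card_fin]

theorem stmt_19 (I n : ℕ) (hn : 0 < n) (Θ : Fin n → Set (Fin I → ℝ))
    (hne : ∀ h, (Θ h).Nonempty) (hcomp : ∀ h, IsCompact (Θ h))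
    (hconv : ∀ h, Convex ℝ (Θ h)) (hzero : ∀ h, (0 : Fin I → ℝ) ∈ Θ h)
    (hSPI : ∀ h, SignedPermInvariant I (Θ h))
    (hdiff : ∀ h, ∀ i : ℕ, 1 ≤ i → i ≤ I - 1 →
      eta I (Θ h) (i + 1) - eta I (Θ h) i ≤ eta I (Θ h) i - eta I (Θ h) (i - 1)) :
    SignedPermInvariant I (⋂ h, Θ h) ∧
    (∀ i : ℕ, 1 ≤ i → i ≤ I →
      eta I (⋂ h, Θ h) i = ⨅ h : Fin n, eta I (Θ h) i) ∧
    (∀ i : ℕ, 1 ≤ i → i ≤ I - 1 →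
      eta I (⋂ h, Θ h) (i + 1) - eta I (⋂ h, Θ h) i ≤
        eta I (⋂ h, Θ h) i - eta I (⋂ h, Θ h) (i - 1)) := by
  have h0 : Fin n := ⟨0, hn⟩
  haveI : Nonempty (Fin n) := ⟨h0⟩
  set T := ⋂ h, Θ h with hT
  have hzT : (0 : Fin I → ℝ) ∈ T := Set.mem_iInter.2 hzero
  have hTne : T.Nonempty := ⟨0, hzT⟩
  have hTclosed : IsClosed T := isClosed_iInter fun h => (hcomp h).isClosed
  have hTc : IsCompact T := (hcomp h0).of_isClosed_subset hTclosed (Set.iInter_subset _ h0)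
  have key : ∀ i : ℕ, i ≤ I → eta I T i = ⨅ h : Fin n, eta I (Θ h) i := by
    intro i hiI
    rcases Nat.eq_zero_or_pos i with rfl | hi1
    · rw [eta_zero hTne, iInf_congr (fun h => eta_zero (hne h)), ciInf_const]
    · set m := ⨅ h : Fin n, eta I (Θ h) i with hm
      have hipos : (0 : ℝ) < i := by exact_mod_cast hi1
      have hbdd : BddBelow (Set.range fun h => eta I (Θ h) i) :=
        (Set.finite_range _).bddBelow
      have hm0 : 0 ≤ m := le_ciInf fun h => eta_nonneg (hcomp h) (hzero h)
      apply le_antisymm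
      · exact le_ciInf fun h => eta_mono (hcomp h) hTne (Set.iInter_subset _ h)
      · set θh : Fin I → ℝ := fun j => if (j : ℕ) < i then m / i else 0 with hθh
        have hmemT : θh ∈ T := Set.mem_iInter.2 fun h =>
          flat_mem (hcomp h) (hne h) (hconv h) (hzero h) (hSPI h) hi1 hiI hm0
            (ciInf_le hbdd h)
        have hfs : fsum I i θh = m := by
          rw [fsum, Finset.sum_congr rfl (fun j hj => by
            have : (j : ℕ) < i := (Finset.mem_filter.1 hj).2
            rw [show |θh j| = m / i by
              rw [hθh]; simp only [if_pos this]; exact abs_of_nonneg (by positivity)]),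
            Finset.sum_const, card_filter_lt hiI, nsmul_eq_mul]
          field_simp
        calc m = fsum I i θh := hfs.symm
          _ ≤ eta I T i := le_eta hTc hmemT
  refine ⟨?_, fun i _ hiI => key i hiI, ?_⟩
  · intro σ ε hε θ hθ
    exact Set.mem_iInter.2 fun h => hSPI h σ ε hε θ (Set.mem_iInter.1 hθ h)
  · intro i hi1 hiI'
    have hI1 : i + 1 ≤ I := by omega
    have e1 := key (i + 1) hI1
    have e2 := key i (by omega)
    have e3 := key (i - 1) (by omega)
    have hbd1 : ∀ h, eta I T (i + 1) ≤ eta I (Θ h) (i + 1) := fun h =>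
      e1 ▸ ciInf_le ((Set.finite_range _).bddBelow) h
    have hbd3 : ∀ h, eta I T (i - 1) ≤ eta I (Θ h) (i - 1) := fun h =>
      e3 ▸ ciInf_le ((Set.finite_range _).bddBelow) h
    have hhalf : (eta I T (i + 1) + eta I T (i - 1)) / 2 ≤ ⨅ h : Fin n, eta I (Θ h) i :=
      le_ciInf fun h => by
        have hd := hdiff h i hi1 hiI'
        have h1 := hbd1 h
        have h3 := hbd3 h
        linarith
    rw [← e2] at hhalf
    linarith
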